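/- For a convex function f : ℝ^n → ℝ and the cone K_f = cl{(x, γ, t) : γ > 0, γ f(x/γ) ≤ t}: a point (x, 1, t) belongs to K_f if and only if f(x) ≤ t. -/

import Mathlib

/-- Fixing the perspective variable to 1 in the cone `K_f` recovers the epigraph of `f`:
`(x, 1, t) ∈ K_f` iff `f x ≤ t`. -/
theorem stmt_13 {n : ℕ} (f : (Fin n → ℝ) → ℝ) (hf : ConvexOn ℝ Set.univ f)
    (x : Fin n → ℝ) (t : ℝ) :
    (x, (1 : ℝ), t) ∈ closure {q : (Fin n → ℝ) × ℝ × ℝ |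
        0 < q.2.1 ∧ q.2.1 * f (q.2.1⁻¹ • q.1) ≤ q.2.2} ↔ f x ≤ t := by
  constructor
  · intro hmem
    obtain ⟨u, hu, hlim⟩ := mem_closure_iff_seq_limit.mp hmem
    have hfc : Continuous f := by
      have := hf.continuousOn isOpen_univ
      rwa [← continuousOn_univ]
    have h1 : Filter.Tendsto (fun k => (u k).1) Filter.atTop (nhds x) :=
      (continuous_fst.tendsto _).comp hlim
    have h2 : Filter.Tendsto (fun k => (u k).2.1) Filter.atTop (nhds 1) :=
      ((continuous_fst.comp continuous_snd).tendsto _).comp hlim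
    have h3 : Filter.Tendsto (fun k => (u k).2.2) Filter.atTop (nhds t) :=
      ((continuous_snd.comp continuous_snd).tendsto _).comp hlim
    have hL : Filter.Tendsto (fun k => (u k).2.1 * f ((u k).2.1⁻¹ • (u k).1))
        Filter.atTop (nhds ((1 : ℝ) * f ((1 : ℝ)⁻¹ • x))) :=
      h2.mul ((hfc.tendsto _).comp ((h2.inv₀ one_ne_zero).smul h1))
    have : (1 : ℝ) * f ((1 : ℝ)⁻¹ • x) = f x := by norm_num
    rw [this] at hL
    exact le_of_tendsto_of_tendsto' hL h3 fun k => (hu k).2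
  · intro h
    exact subset_closure ⟨one_pos, by simpa using h⟩
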